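/- On the sublevel set {H < 1/4} of the octupole potential U(q₁,q₂) = (q₁²+q₂²)/2 + (q₁⁴+q₂⁴)/4 - (3/2)q₁²q₂², trajectories remain bounded: if a solution of the Hamiltonian system has initial energy E < 1/4, then (q₁(t), q₂(t)) remains inside the bounded connected component of {U < E} containing the initial position, for all time t. In particular, the connected component of {(q₁,q₂) : U(q₁,q₂) < E} containing the origin is bounded for every E < 1/4. -/
import Mathlib


noncomputable def Uoct (q : ℝ × ℝ) : ℝ :=
  (q.1 ^ 2 + q.2 ^ 2) / 2 + (q.1 ^ 4 + q.2 ^ 4) / 4 - (3 / 2) * q.1 ^ 2 * q.2 ^ 2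

lemma Uoct_ge_on_lines (q : ℝ × ℝ) (h : q.1 ^ 2 = 1 / 2 ∨ q.2 ^ 2 = 1 / 2) :
    (1 : ℝ) / 4 ≤ Uoct q := by
  unfold Uoct
  rcases h with h | h
  · nlinarith [sq_nonneg (q.2 ^ 2 - 1 / 2)]
  · nlinarith [sq_nonneg (q.1 ^ 2 - 1 / 2)]

/-- For each E < 1/4, the connected component of the open sublevel set
{U < E} ⊂ ℝ² containing the origin is bounded. -/
theorem stmt_15 (E : ℝ) (hE : E < 1 / 4) :
    Bornology.IsBounded
      (connectedComponentIn {q : ℝ × ℝ | Uoct q < E} ((0 : ℝ), (0 : ℝ))) := by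
  set A : Set (ℝ × ℝ) := {q : ℝ × ℝ | Uoct q < E} with hA
  by_cases h0 : ((0 : ℝ), (0 : ℝ)) ∈ A
  · -- split plane into open square S and open exterior T
    set S : Set (ℝ × ℝ) := {q | q.1 ^ 2 < 1 / 2 ∧ q.2 ^ 2 < 1 / 2} with hS
    set T : Set (ℝ × ℝ) := {q | 1 / 2 < q.1 ^ 2 ∨ 1 / 2 < q.2 ^ 2} with hT
    have hSopen : IsOpen S := by
      have : S = ((fun q : ℝ × ℝ => q.1 ^ 2) ⁻¹' Set.Iio (1 / 2)) ∩
          ((fun q : ℝ × ℝ => q.2 ^ 2) ⁻¹' Set.Iio (1 / 2)) := rfl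
      rw [this]
      exact ((isOpen_Iio.preimage (by fun_prop)).inter (isOpen_Iio.preimage (by fun_prop)))
    have hTopen : IsOpen T := by
      have : T = ((fun q : ℝ × ℝ => q.1 ^ 2) ⁻¹' Set.Ioi (1 / 2)) ∪
          ((fun q : ℝ × ℝ => q.2 ^ 2) ⁻¹' Set.Ioi (1 / 2)) := rfl
      rw [this]
      exact ((isOpen_Ioi.preimage (by fun_prop)).union (isOpen_Ioi.preimage (by fun_prop)))
    have hdisj : Disjoint S T := by
      rw [Set.disjoint_left]
      rintro q ⟨h1, h2⟩ (h3 | h3) <;> linarith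
    set C := connectedComponentIn A ((0 : ℝ), (0 : ℝ)) with hC
    have hCsub : C ⊆ A := connectedComponentIn_subset _ _
    have hcover : C ⊆ S ∪ T := by
      intro q hq
      have hqA : Uoct q < E := hCsub hq
      have h1 : q.1 ^ 2 ≠ 1 / 2 := by
        intro h; have := Uoct_ge_on_lines q (Or.inl h); linarith
      have h2 : q.2 ^ 2 ≠ 1 / 2 := by
        intro h; have := Uoct_ge_on_lines q (Or.inr h); linarith
      rcases lt_or_gt_of_ne h1 with h1' | h1'
      · rcases lt_or_gt_of_ne h2 with h2' | h2'
        · exact Or.inl ⟨h1', h2'⟩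
        · exact Or.inr (Or.inr h2')
      · exact Or.inr (Or.inl h1')
    have hCpre : IsPreconnected C := (isConnected_connectedComponentIn_iff.mpr h0).isPreconnected
    have hCS : (C ∩ S).Nonempty := by
      refine ⟨((0 : ℝ), (0 : ℝ)), mem_connectedComponentIn h0, ?_⟩
      constructor <;> norm_num
    have hsubS : C ⊆ S := hCpre.subset_left_of_subset_union hSopen hTopen hdisj hcover hCS
    refine (Bornology.IsBounded.subset ?_ hsubS)
    have : S ⊆ Metric.closedBall 0 1 := by
      rintro q ⟨h1, h2⟩
      rw [Metric.mem_closedBall, Prod.dist_eq]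
      have e1 : |q.1| ≤ 1 := by nlinarith [abs_nonneg q.1, sq_abs q.1]
      have e2 : |q.2| ≤ 1 := by nlinarith [abs_nonneg q.2, sq_abs q.2]
      simp only [Prod.fst_zero, Prod.snd_zero, Real.dist_eq, sub_zero]
      exact max_le e1 e2
    exact Metric.isBounded_closedBall.subset this
  · rw [connectedComponentIn_eq_empty h0]
    exact Bornology.isBounded_empty
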